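/- A holomorphic vector bundle E on the complex projective line that admits a holomorphic connection D : E → E ⊗ Ω¹ is holomorphically trivial. -/

import Mathlib

open Polynomial LaurentPolynomial

lemma toLaurent_apply_neg_one (p : Polynomial ℂ) :
    (Polynomial.toLaurent p).coeff (-1 : ℤ) = 0 := by
  classical
  rw [← Finsupp.notMem_support_iff]
  rw [LaurentPolynomial.toLaurent_support]
  simp only [Finset.mem_map, Nat.castEmbedding_apply]
  rintro ⟨n, -, hn⟩
  omega

lemma aeval_T_neg_one (p : Polynomial ℂ) :
    Polynomial.aeval (LaurentPolynomial.T (-1) : LaurentPolynomial ℂ) p =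
      LaurentPolynomial.invert (Polynomial.toLaurent p) := by
  have h : (LaurentPolynomial.invert.toAlgHom.comp Polynomial.toLaurentAlg :
      Polynomial ℂ →ₐ[ℂ] LaurentPolynomial ℂ) =
      Polynomial.aeval (LaurentPolynomial.T (-1) : LaurentPolynomial ℂ) := by
    apply Polynomial.algHom_ext
    simp [Polynomial.toLaurentAlg_apply, Polynomial.toLaurent_X]
  have := AlgHom.congr_fun h p
  simpa [Polynomial.toLaurentAlg_apply] using this.symm

/-- A holomorphic vector bundle `E` on `ℙ¹` that admits a holomorphic
connection `D : E → E ⊗ Ω¹` is holomorphically trivial.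

Čech/clutching formalization on the standard cover `ℙ¹ = U₀ ∪ U₁` (coordinates
`z` and `w = 1/z`):  by Birkhoff–Grothendieck, `E` may be presented by the clutching
matrix `g = diag(z^{aᵢ})` over `ℂ[z, z⁻¹]`.  A holomorphic connection is a pair of
matrices `A₀(z)`, `A₁(w)` with polynomial (i.e. holomorphic on the chart) entries such
that on the overlap `A₁ dw = g⁻¹ dg + g⁻¹ A₀ g dz`, i.e. entrywise (using `dz = -z²dw`)
`A₁(1/z)ᵢⱼ = -z^{2 + aⱼ - aᵢ}·A₀(z)ᵢⱼ - δᵢⱼ·aᵢ·z`.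
`E` is trivial iff the clutching matrix factors as `g = U₀·U₁` with `U₀` invertible
over `ℂ[z]` and `U₁` invertible over `ℂ[w] = ℂ[z⁻¹]`. -/
theorem trivial_of_holomorphic_connection_P1
    (r : ℕ) (a : Fin r → ℤ)
    (A0 A1 : Matrix (Fin r) (Fin r) (Polynomial ℂ))
    (hcompat : ∀ i j,
      Polynomial.aeval (LaurentPolynomial.T (-1) : LaurentPolynomial ℂ) (A1 i j) =
        -(LaurentPolynomial.T (2 + a j - a i) * Polynomial.toLaurent (A0 i j))
          - (if i = j then LaurentPolynomial.C ((a i : ℂ)) * LaurentPolynomial.T 1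
             else 0)) :
    ∃ U0 U1 : Matrix (Fin r) (Fin r) (Polynomial ℂ),
      IsUnit U0.det ∧ IsUnit U1.det ∧
      Matrix.diagonal (fun i => (LaurentPolynomial.T (a i) : LaurentPolynomial ℂ)) =
        U0.map (fun q => Polynomial.toLaurent q) *
        U1.map (fun q =>
          Polynomial.aeval (LaurentPolynomial.T (-1) : LaurentPolynomial ℂ) q) := by
  have key : ∀ i, a i = 0 := by
    intro i
    have h := congrArg (fun f : LaurentPolynomial ℂ => f.coeff (1 : ℤ)) (hcompat i i)
    simp only [eq_self_iff_true, if_true, aeval_T_neg_one] at h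
    have hL : (LaurentPolynomial.invert (Polynomial.toLaurent (A1 i i))).coeff (1 : ℤ) = 0 := by
      rw [LaurentPolynomial.invert_apply]
      exact toLaurent_apply_neg_one _
    have h2 : (2 : ℤ) + a i - a i = 2 := by ring
    rw [h2] at h
    have hmul : ((LaurentPolynomial.T 2 * Polynomial.toLaurent (A0 i i)) :
        LaurentPolynomial ℂ).coeff (1 : ℤ) = 0 := by
      have h1 := AddMonoidAlgebra.coeff_single_mul_apply
        (Polynomial.toLaurent (A0 i i)) (1 : ℂ) (2 : ℤ) (1 : ℤ)
      rw [one_mul] at h1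
      have h2 : ((-2 : ℤ) + 1) = -1 := by ring
      rw [h2, toLaurent_apply_neg_one] at h1
      exact h1
    have hC : ((LaurentPolynomial.C ((a i : ℂ)) * LaurentPolynomial.T 1) :
        LaurentPolynomial ℂ).coeff (1 : ℤ) = (a i : ℂ) := by
      rw [← LaurentPolynomial.single_eq_C_mul_T]
      exact Finsupp.single_eq_same
    rw [hL] at h
    rw [AddMonoidAlgebra.coeff_sub, Finsupp.sub_apply, AddMonoidAlgebra.coeff_neg, Finsupp.neg_apply, hmul, hC] at h
    have : ((a i : ℂ)) = 0 := by
      have := h.symm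
      simp only [neg_zero, zero_sub, neg_eq_zero] at this
      exact this
    exact_mod_cast this
  refine ⟨1, 1, by simp, by simp, ?_⟩
  have hd : (fun i => (LaurentPolynomial.T (a i) : LaurentPolynomial ℂ)) = fun _ => 1 := by
    funext i; rw [key i, LaurentPolynomial.T_zero]
  rw [hd, Matrix.diagonal_one,
    Matrix.map_one _ (map_zero _) (map_one _),
    Matrix.map_one _ (map_zero _) (map_one _), one_mul]
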